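/- Let θ_1, θ, θ_2 be real numbers with sin(θ − θ_1) ≠ 0 and sin(θ_2 − θ) ≠ 0. Then the family n ↦ (θ_2 − θ_1)/((θ_2 − θ − 2πn)(θ + 2πn − θ_1)), indexed by n ∈ ℤ, is summable (all denominators are nonzero), and Σ_{n∈ℤ} (θ_2 − θ_1)/((θ_2 − θ − 2πn)(θ + 2πn − θ_1)) = (sin(θ_2 − θ_1) + sin(θ − θ_1) + sin(θ_2 − θ)) / (2 sin(θ − θ_1) sin(θ_2 − θ)). -/

import Mathlib

open MeasureTheory AddCircle
open scoped Real

noncomputable section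
namespace PizzaAux

local instance fact2pi : Fact ((0:ℝ) < 2 * π) := ⟨by positivity⟩

/-- The function `t ↦ exp(i l t)` lifted to the circle `ℝ/2πℤ` using `(0, 2π]`. -/
def F (l : ℝ) : AddCircle (2 * π) → ℂ :=
  AddCircle.liftIoc (2 * π) 0 fun t : ℝ => Complex.exp ((l : ℂ) * t * Complex.I)

lemma F_apply (l : ℝ) (x : AddCircle (2 * π)) :
    F l x = Complex.exp ((l : ℂ) * ((AddCircle.equivIoc (2 * π) 0 x : ℝ)) * Complex.I) := rfl

lemma measurable_F (l : ℝ) : Measurable (F l) := by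
  have h1 : Measurable fun x : AddCircle (2 * π) => ((AddCircle.equivIoc (2 * π) 0 x : ℝ)) :=
    measurable_subtype_coe.comp (AddCircle.measurableEquivIoc (2 * π) 0).measurable
  have h2 : Continuous fun r : ℝ => Complex.exp ((l : ℂ) * r * Complex.I) := by continuity
  exact h2.measurable.comp h1

lemma norm_F (l : ℝ) (x : AddCircle (2 * π)) : ‖F l x‖ = 1 := by
  rw [F_apply]
  rw [show ((l : ℂ) * ((AddCircle.equivIoc (2 * π) 0 x : ℝ)) * Complex.I)
      = ((l * (AddCircle.equivIoc (2 * π) 0 x : ℝ) : ℝ) : ℂ) * Complex.I by push_cast; ring]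
  exact Complex.norm_exp_ofReal_mul_I _

lemma memF (l : ℝ) : MemLp (F l) 2 (@AddCircle.haarAddCircle (2 * π) fact2pi) := by
  apply MemLp.of_bound (measurable_F l).aestronglyMeasurable 1
  exact Filter.Eventually.of_forall fun x => (norm_F l x).le

/-- The corresponding element of L². -/
def G (l : ℝ) : Lp ℂ 2 (@AddCircle.haarAddCircle (2 * π) fact2pi) := (memF l).toLp (F l)

lemma coeff_F (l : ℝ) (n : ℤ) (h : l - (n : ℝ) ≠ 0) :
    fourierCoeff (F l) n
      = (Complex.exp (2 * π * l * Complex.I) - 1) / (2 * π * ((l : ℂ) - n) * Complex.I) := by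
  have hπ : (π : ℝ) ≠ 0 := Real.pi_ne_zero
  rw [F, fourierCoeff_liftIoc_eq, fourierCoeffOn_eq_integral]
  have key : ∀ x : ℝ,
      (fourier (-n) (x : AddCircle (0 + 2 * π - 0))) • Complex.exp ((l : ℂ) * x * Complex.I)
        = Complex.exp ((((l - n : ℝ)) : ℂ) * Complex.I * x) := by
    intro x
    rw [fourier_coe_apply, smul_eq_mul, ← Complex.exp_add]
    congr 1
    have h0 : ((0 + 2 * π - 0 : ℝ) : ℂ) ≠ 0 := by
      simpa using hπ
    have hπc : ((π : ℝ) : ℂ) ≠ 0 := by simpa using hπ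
    field_simp
    push_cast
    ring
  simp_rw [key]
  have h2 : (((l - n : ℝ)) : ℂ) ≠ 0 := Complex.ofReal_ne_zero.mpr h
  have hc : ((((l - n : ℝ)) : ℂ) * Complex.I) ≠ 0 := mul_ne_zero h2 Complex.I_ne_zero
  rw [integral_exp_mul_complex hc]
  have e1 : Complex.exp ((((l - n : ℝ)) : ℂ) * Complex.I * ((0 : ℝ) + 2 * π : ℝ))
      = Complex.exp (2 * π * l * Complex.I) := by
    have : ((((l - n : ℝ)) : ℂ) * Complex.I) * (((0 : ℝ) + 2 * π : ℝ) : ℂ)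
        = 2 * π * l * Complex.I + (-n : ℤ) * (2 * π * Complex.I) := by push_cast; ring
    rw [this, Complex.exp_add, Complex.exp_int_mul_two_pi_mul_I, mul_one]
  have e0 : (((l - n : ℝ)) : ℂ) * Complex.I * ((0 : ℝ) : ℂ) = 0 := by
    push_cast; ring
  rw [e0, e1, Complex.exp_zero, Complex.real_smul]
  have hπc : ((π : ℝ) : ℂ) ≠ 0 := by simpa using hπ
  push_cast
  field_simp
  ring

lemma coeff_G (l : ℝ) (n : ℤ) :
    fourierCoeff ((G l : AddCircle (2 * π) → ℂ)) n = fourierCoeff (F l) n := by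
  apply integral_congr_ae
  filter_upwards [(memF l).coeFn_toLp] with x hx
  rw [show ((G l : AddCircle (2*π) → ℂ)) x = F l x from hx]

lemma F_mul (l m : ℝ) (x : AddCircle (2 * π)) :
    (starRingEnd ℂ) (F m x) * F l x = F (l - m) x := by
  rw [F_apply, F_apply, F_apply, ← Complex.exp_conj, ← Complex.exp_add]
  congr 1
  simp only [map_mul, Complex.conj_I, Complex.conj_ofReal]
  push_cast
  ring

lemma inner_eq (l m : ℝ) :
    (inner ℂ (G m) (G l) : ℂ) = fourierCoeff (F (l - m)) 0 := by
  rw [MeasureTheory.L2.inner_def]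
  have h0 : fourierCoeff (F (l - m)) 0 = ∫ x, F (l - m) x ∂haarAddCircle := by
    simp [fourierCoeff]
  rw [h0]
  apply integral_congr_ae
  filter_upwards [(memF m).coeFn_toLp, (memF l).coeFn_toLp] with x hm hl
  rw [RCLike.inner_apply', show ((G m : AddCircle (2*π) → ℂ)) x = F m x from hm,
    show ((G l : AddCircle (2*π) → ℂ)) x = F l x from hl, F_mul]

lemma parseval (l m : ℝ) :
    HasSum (fun n : ℤ => (starRingEnd ℂ) (fourierCoeff (F m) n) * fourierCoeff (F l) n)
      (fourierCoeff (F (l - m)) 0) := by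
  have H := fourierBasis.hasSum_inner_mul_inner (G m) (G l)
  rw [inner_eq] at H
  have hfun : ∀ n : ℤ,
      (inner ℂ (G m) (fourierBasis n) : ℂ) * inner ℂ (fourierBasis n) (G l)
        = (starRingEnd ℂ) (fourierCoeff (F m) n) * fourierCoeff (F l) n := by
    intro n
    rw [← fourierBasis.repr_apply_apply, fourierBasis_repr, coeff_G,
      ← inner_conj_symm, ← fourierBasis.repr_apply_apply, fourierBasis_repr, coeff_G]
  rwa [show (fun n : ℤ => (inner ℂ (G m) (fourierBasis n) : ℂ) * inner ℂ (fourierBasis n) (G l))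
      = fun n : ℤ => (starRingEnd ℂ) (fourierCoeff (F m) n) * fourierCoeff (F l) n
    from funext hfun] at H

lemma exp_sub_one_ne (x : ℝ) (hx : Real.sin x ≠ 0) :
    Complex.exp ((x : ℂ) * Complex.I) - 1 ≠ 0 := by
  intro h
  have h1 : Complex.exp ((x : ℂ) * Complex.I) = 1 := by linear_combination h
  have h2 : Complex.exp (-(x : ℂ) * Complex.I) = 1 := by
    rw [neg_mul, Complex.exp_neg, h1, inv_one]
  apply hx
  have h3 : Complex.sin (x : ℂ) = 0 := by
    rw [Complex.sin, h1, h2]; ring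
  have h4 : ((Real.sin x : ℝ) : ℂ) = 0 := by rw [Complex.ofReal_sin, h3]
  exact_mod_cast h4

lemma conj_coeff_F (μ : ℝ) (n : ℤ) (h : μ - n ≠ 0) :
    (starRingEnd ℂ) (fourierCoeff (F μ) n)
      = (Complex.exp (-(2 * π * μ) * Complex.I) - 1) /
          (-(2 * π * ((μ : ℂ) - n)) * Complex.I) := by
  rw [coeff_F μ n h, map_div₀, map_sub, map_one, ← Complex.exp_conj]
  congr 2
  · simp only [map_mul, Complex.conj_I, Complex.conj_ofReal, map_ofNat]
    ring
  · simp only [map_mul, map_sub, Complex.conj_I, Complex.conj_ofReal, map_ofNat, map_intCast]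
    ring

lemma sin_exp_form (x : ℝ) :
    Complex.sin ((x : ℝ) : ℂ)
      = ((Complex.exp ((x : ℂ) * Complex.I))⁻¹ - Complex.exp ((x : ℂ) * Complex.I))
          * Complex.I / 2 := by
  rw [Complex.sin, neg_mul, Complex.exp_neg]

lemma alg1 (c X Y A B : ℂ) (hX : X ≠ 0) (hY : Y ≠ 0) (hA : A ≠ 0) (hB : B ≠ 0) :
    -c / (X * Y) * (X / (A * Complex.I) * (Y / (B * Complex.I))) = c / (B * A) := by
  rw [div_mul_div_comm, div_mul_div_comm,
    show A * Complex.I * (B * Complex.I) = -(A * B) by linear_combination A * B * Complex.I_mul_I,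
    div_eq_div_iff (by simp [hX, hY, hA, hB]) (by simp [hA, hB])]
  ring

lemma one_sub_sq_exp_ne (x : ℝ) (hx : Real.sin x ≠ 0) :
    (1 : ℂ) - (Complex.exp ((x : ℂ) * Complex.I)) ^ 2 ≠ 0 := by
  intro h
  apply hx
  have hU : Complex.exp ((x : ℂ) * Complex.I) ≠ 0 := Complex.exp_ne_zero _
  have hinv : (Complex.exp ((x : ℂ) * Complex.I))⁻¹ = Complex.exp ((x : ℂ) * Complex.I) := by
    rw [inv_eq_one_div, div_eq_iff hU]
    linear_combination h
  have h0 : Complex.sin ((x : ℝ) : ℂ) = 0 := by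
    rw [sin_exp_form, hinv]; ring
  have h4 : ((Real.sin x : ℝ) : ℂ) = 0 := by rw [Complex.ofReal_sin, h0]
  exact_mod_cast h4


lemma alg2 (c X Y : ℂ) (hc : c ≠ 0) (hX : X ≠ 0) (hY : Y ≠ 0) (hX1 : X - 1 ≠ 0) (hY1 : Y - 1 ≠ 0)
    (hsX : (1 : ℂ) - X ^ 2 ≠ 0) (hsY : (1 : ℂ) - Y ^ 2 ≠ 0) :
    -c / ((X - 1) * (Y - 1)) * ((X * Y - 1) / (c * Complex.I))
      = (((X * Y)⁻¹ - X * Y) * Complex.I / 2 + (X⁻¹ - X) * Complex.I / 2 +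
          (Y⁻¹ - Y) * Complex.I / 2) /
        (2 * ((X⁻¹ - X) * Complex.I / 2) * ((Y⁻¹ - Y) * Complex.I / 2)) := by
  have hI : Complex.I ≠ 0 := Complex.I_ne_zero
  have h2XY : (2 : ℂ) * X * Y ≠ 0 := by simp [hX, hY]
  have e1 : X⁻¹ - X = (1 - X ^ 2) / X := by field_simp
  have e2 : Y⁻¹ - Y = (1 - Y ^ 2) / Y := by field_simp
  have e3 : (X * Y)⁻¹ - X * Y = (1 - (X * Y) ^ 2) / (X * Y) := by field_simp
  have s3 : (1 - (X * Y) ^ 2) / (X * Y) * Complex.I / 2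
      = ((1 - (X * Y) ^ 2) * Complex.I) / (2 * X * Y) := by
    rw [div_mul_eq_mul_div, div_div]; congr 1; ring
  have s1 : (1 - X ^ 2) / X * Complex.I / 2 = (Y * ((1 - X ^ 2) * Complex.I)) / (2 * X * Y) := by
    rw [div_mul_eq_mul_div, div_div, div_eq_div_iff (by simp [hX]) h2XY]; ring
  have s2 : (1 - Y ^ 2) / Y * Complex.I / 2 = (X * ((1 - Y ^ 2) * Complex.I)) / (2 * X * Y) := by
    rw [div_mul_eq_mul_div, div_div, div_eq_div_iff (by simp [hY]) h2XY]; ring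
  have t1 : (1 - X ^ 2) / X * Complex.I / 2 = ((1 - X ^ 2) * Complex.I) / (2 * X) := by
    rw [div_mul_eq_mul_div, div_div]; congr 1; ring
  have t2 : (1 - Y ^ 2) / Y * Complex.I / 2 = ((1 - Y ^ 2) * Complex.I) / (2 * Y) := by
    rw [div_mul_eq_mul_div, div_div]; congr 1; ring
  have hDen' : 2 * ((1 - X ^ 2) / X * Complex.I / 2) * ((1 - Y ^ 2) / Y * Complex.I / 2)
      = -((1 - X ^ 2) * (1 - Y ^ 2)) / (2 * X * Y) := by
    rw [t1, t2, mul_comm (2:ℂ), mul_assoc,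
      show (2:ℂ) * ((1 - Y ^ 2) * Complex.I / (2 * Y)) = ((1 - Y ^ 2) * Complex.I) / Y from by
        rw [eq_div_iff hY]; field_simp,
      div_mul_div_comm, div_eq_div_iff (by simp [hX, hY]) h2XY]
    linear_combination (2 * X * Y * (1 - X ^ 2) * (1 - Y ^ 2)) * Complex.I_mul_I
  rw [e1, e2, e3, hDen', s3, s1, s2, ← add_div, ← add_div, div_div_eq_mul_div,
    div_mul_cancel₀ _ h2XY, div_mul_div_comm,
    div_eq_div_iff (mul_ne_zero (mul_ne_zero hX1 hY1) (mul_ne_zero hc hI))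
      (neg_ne_zero.mpr (mul_ne_zero hsX hsY))]
  linear_combination (-((1 - (X * Y) ^ 2 + Y * (1 - X ^ 2) + X * (1 - Y ^ 2)) * ((X - 1) * (Y - 1))
    * c)) * Complex.I_mul_I

end PizzaAux
end

instance stmtFact : Fact ((0:ℝ) < 2 * Real.pi) := ⟨by positivity⟩


open PizzaAux in
/-- **Sum over preimages in the push-forward onto the pizza slice (angular coordinates).**
For `sin(θ - θ₁) ≠ 0` and `sin(θ₂ - θ) ≠ 0`, the family
`n ↦ (θ₂ - θ₁)/((θ₂ - θ - 2πn)(θ + 2πn - θ₁))` over `n ∈ ℤ` has nonzero denominators,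
is summable, and its sum equals
`(sin(θ₂ - θ₁) + sin(θ - θ₁) + sin(θ₂ - θ))/(2 sin(θ - θ₁) sin(θ₂ - θ))`. -/
theorem stmt_11 (θ₁ θ θ₂ : ℝ) (h1 : Real.sin (θ - θ₁) ≠ 0)
    (h2 : Real.sin (θ₂ - θ) ≠ 0) :
    (∀ n : ℤ, θ₂ - θ - 2 * Real.pi * n ≠ 0 ∧ θ + 2 * Real.pi * n - θ₁ ≠ 0) ∧
    Summable (fun n : ℤ =>
      (θ₂ - θ₁) / ((θ₂ - θ - 2 * Real.pi * n) * (θ + 2 * Real.pi * n - θ₁))) ∧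
    ∑' n : ℤ, (θ₂ - θ₁) / ((θ₂ - θ - 2 * Real.pi * n) * (θ + 2 * Real.pi * n - θ₁)) =
      (Real.sin (θ₂ - θ₁) + Real.sin (θ - θ₁) + Real.sin (θ₂ - θ)) /
        (2 * Real.sin (θ - θ₁) * Real.sin (θ₂ - θ)) := by
  have hπ' : (π : ℝ) ≠ 0 := Real.pi_ne_zero
  have hden : ∀ n : ℤ, θ₂ - θ - 2 * Real.pi * n ≠ 0 ∧ θ + 2 * Real.pi * n - θ₁ ≠ 0 := by
    intro n
    constructor
    · intro hn
      apply h2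
      rw [show θ₂ - θ = ((2 * n : ℤ) : ℝ) * Real.pi by push_cast; linarith]
      exact Real.sin_int_mul_pi _
    · intro hn
      apply h1
      rw [show θ - θ₁ = ((-(2 * n) : ℤ) : ℝ) * Real.pi by push_cast; linarith]
      exact Real.sin_int_mul_pi _
  refine ⟨hden, ?_⟩
  by_cases hc : θ₂ - θ₁ = 0
  · have hz : (fun n : ℤ => (θ₂ - θ₁) / ((θ₂ - θ - 2 * π * n) * (θ + 2 * π * n - θ₁)))
        = fun _ : ℤ => (0 : ℝ) := by
      funext n; rw [hc, zero_div]
    refine ⟨?_, ?_⟩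
    · rw [hz]; exact summable_zero
    · rw [hz, tsum_zero, hc, show θ₂ - θ = -(θ - θ₁) by linarith, Real.sin_zero, Real.sin_neg]
      simp
  · obtain ⟨l, hlb⟩ : ∃ l : ℝ, 2 * π * l = θ₂ - θ := ⟨(θ₂ - θ) / (2 * π), by field_simp⟩
    obtain ⟨m, hma⟩ : ∃ m : ℝ, 2 * π * m = -(θ - θ₁) := ⟨-(θ - θ₁) / (2 * π), by field_simp⟩
    have hlm : 2 * π * (l - m) = θ₂ - θ₁ := by linear_combination hlb - hma
    have hln : ∀ n : ℤ, l - (n : ℝ) ≠ 0 := by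
      intro n hn
      apply (hden n).1
      have h' : l = n := sub_eq_zero.mp hn
      have := hlb
      rw [h'] at this
      linarith
    have hmn : ∀ n : ℤ, m - (n : ℝ) ≠ 0 := by
      intro n hn
      apply (hden n).2
      have h' : m = n := sub_eq_zero.mp hn
      have := hma
      rw [h'] at this
      linarith
    have hlm0 : (l - m) - ((0 : ℤ) : ℝ) ≠ 0 := by
      intro hn
      apply hc
      rw [Int.cast_zero, sub_zero] at hn
      rw [← hlm, hn, mul_zero]
    have eAr : -(2 * π * m) = θ - θ₁ := by linarith
    have eEr : (θ₂ - θ₁ : ℝ) = 2 * π * (l - m) := hlm.symm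
    -- cast equalities
    have eA : -(2 * ((π : ℝ) : ℂ) * (m : ℂ)) = ((θ - θ₁ : ℝ) : ℂ) := by
      rw [← eAr]; push_cast; ring
    have eB : (2 * ((π : ℝ) : ℂ) * (l : ℂ)) = ((θ₂ - θ : ℝ) : ℂ) := by
      rw [← hlb]; push_cast; ring
    have eC : ∀ n : ℤ, -(2 * ((π : ℝ) : ℂ) * ((m : ℂ) - (n : ℂ))) = ((θ + 2 * π * n - θ₁ : ℝ) : ℂ) := by
      intro n
      have h' : (θ + 2 * π * n - θ₁ : ℝ) = -(2 * π * (m - (n : ℝ))) := by linear_combination hma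
      rw [h']; push_cast; ring
    have eD : ∀ n : ℤ, (2 * ((π : ℝ) : ℂ) * ((l : ℂ) - (n : ℂ))) = ((θ₂ - θ - 2 * π * n : ℝ) : ℂ) := by
      intro n
      have h' : (θ₂ - θ - 2 * π * n : ℝ) = 2 * π * (l - (n : ℝ)) := by linear_combination -hlb
      rw [h']; push_cast; ring
    have eE : (2 * ((π : ℝ) : ℂ) * ((l - m : ℝ) : ℂ)) = ((θ₂ - θ₁ : ℝ) : ℂ) := by
      rw [eEr]; push_cast; ring
    have eF : (2 * ((π : ℝ) : ℂ) * (((l - m : ℝ) : ℂ) - (((0 : ℤ) : ℤ) : ℂ))) = ((θ₂ - θ₁ : ℝ) : ℂ) := by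
      rw [eEr]; push_cast; ring
    -- nonzero facts in ℂ
    have hu : Complex.exp (((θ - θ₁ : ℝ) : ℂ) * Complex.I) - 1 ≠ 0 := exp_sub_one_ne _ h1
    have hv : Complex.exp (((θ₂ - θ : ℝ) : ℂ) * Complex.I) - 1 ≠ 0 := exp_sub_one_ne _ h2
    set K : ℂ := -((θ₂ - θ₁ : ℝ) : ℂ) /
      ((Complex.exp (((θ - θ₁ : ℝ) : ℂ) * Complex.I) - 1) *
        (Complex.exp (((θ₂ - θ : ℝ) : ℂ) * Complex.I) - 1)) with hK
    have H := (parseval l m).mul_left K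
    have hterm : (fun n : ℤ => K * ((starRingEnd ℂ) (fourierCoeff (F m) n) * fourierCoeff (F l) n))
        = fun n : ℤ => (((θ₂ - θ₁) / ((θ₂ - θ - 2 * π * n) * (θ + 2 * π * n - θ₁)) : ℝ) : ℂ) := by
      funext n
      rw [conj_coeff_F m n (hmn n), coeff_F l n (hln n), eA, eB, eC n, eD n,
        Complex.ofReal_div, Complex.ofReal_mul, hK]
      have hA : ((θ + 2 * π * n - θ₁ : ℝ) : ℂ) ≠ 0 := Complex.ofReal_ne_zero.mpr (hden n).2
      have hB : ((θ₂ - θ - 2 * π * n : ℝ) : ℂ) ≠ 0 := Complex.ofReal_ne_zero.mpr (hden n).1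
      exact alg1 _ _ _ _ _ hu hv hA hB
    have hval : K * fourierCoeff (F (l - m)) 0
        = (((Real.sin (θ₂ - θ₁) + Real.sin (θ - θ₁) + Real.sin (θ₂ - θ)) /
            (2 * Real.sin (θ - θ₁) * Real.sin (θ₂ - θ)) : ℝ) : ℂ) := by
      rw [coeff_F (l - m) 0 hlm0, eE, eF, hK]
      rw [Complex.ofReal_div, Complex.ofReal_add, Complex.ofReal_add, Complex.ofReal_mul,
        Complex.ofReal_mul, Complex.ofReal_ofNat, Complex.ofReal_sin, Complex.ofReal_sin,
        Complex.ofReal_sin, sin_exp_form, sin_exp_form, sin_exp_form]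
      have hW : Complex.exp (((θ₂ - θ₁ : ℝ) : ℂ) * Complex.I)
          = Complex.exp (((θ - θ₁ : ℝ) : ℂ) * Complex.I) *
            Complex.exp (((θ₂ - θ : ℝ) : ℂ) * Complex.I) := by
        rw [← Complex.exp_add]; congr 1; push_cast; ring
      rw [hW]
      have hcc : ((θ₂ - θ₁ : ℝ) : ℂ) ≠ 0 := Complex.ofReal_ne_zero.mpr hc
      exact alg2 _ _ _ hcc (Complex.exp_ne_zero _) (Complex.exp_ne_zero _) hu hv
        (one_sub_sq_exp_ne _ h1) (one_sub_sq_exp_ne _ h2)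
    rw [hterm, hval] at H
    exact ⟨(Complex.hasSum_ofReal.mp H).summable, (Complex.hasSum_ofReal.mp H).tsum_eq⟩
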